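/- Let f(n,k) be the probability that in a uniformly random tournament on n vertices, none of the vertices of a fixed k-element set K (with s ∉ K) has a directed path to a fixed vertex s, with f(n,0) = 1 and f(1,0) = 1. Then for all n ≥ k+1 ≥ 2: f(n,k) = Σ_{i=0}^{n-k-1} C(n-k-1, i) · (2^k − 1)^i / 2^(k(n-k)) · f(n-k, i). -/

import Mathlib

/-- A tournament on `Fin n`: an orientation of each edge `{i,j}`, `i < j`, of the complete
graph. `ω ⟨(i,j),h⟩ = true` means the edge is oriented `i → j`. Each of the `2^(n choose 2)`
orientations is equally likely under the uniform probability `Pr`. -/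
abbrev Orient (n : ℕ) : Type := {p : Fin n × Fin n // p.1 < p.2} → Bool

/-- The edge between `i` and `j` is oriented from `i` to `j`. -/
def dir {n : ℕ} (ω : Orient n) (i j : Fin n) : Prop :=
  (∃ h : i < j, ω ⟨(i, j), h⟩ = true) ∨ (∃ h : j < i, ω ⟨(j, i), h⟩ = false)

/-- There is a directed path from `a` to `s` in the tournament `ω`. -/
def reaches {n : ℕ} (ω : Orient n) (a s : Fin n) : Prop :=
  Relation.TransGen (dir ω) a s

/-- The probability of the event `E` for a uniformly random tournament on `n` vertices. -/
noncomputable def Pr (n : ℕ) (E : Orient n → Prop) : ℝ :=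
  haveI := Classical.decPred E
  ((Finset.univ.filter E).card : ℝ) / (Fintype.card (Orient n) : ℝ)

/-- `f n k` is the probability that in a uniformly random tournament on `n` vertices no
vertex of the `k`-element set `{0, …, k-1}` has a directed path to the vertex `k`. -/
noncomputable def f (n k : ℕ) : ℝ :=
  Pr n (fun ω => ∀ a s : Fin n, a.val < k → s.val = k → ¬ reaches ω a s)

/-- permutation action -/
def act {m : ℕ} (σ : Equiv.Perm (Fin m)) (ω : Orient m) : Orient m :=
  fun p => if h : σ p.1.1 < σ p.1.2 then ω ⟨(σ p.1.1, σ p.1.2), h⟩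
    else !ω ⟨(σ p.1.2, σ p.1.1), by
      rcases lt_or_eq_of_le (not_lt.mp h) with h' | h'
      · exact h'
      · exact absurd (σ.injective h') (ne_of_gt p.2)⟩

lemma dir_act {m : ℕ} (σ : Equiv.Perm (Fin m)) (ω : Orient m) (i j : Fin m) :
    dir (act σ ω) i j ↔ dir ω (σ i) (σ j) := by
  rcases lt_trichotomy i j with h | h | h
  · have hne : σ i ≠ σ j := fun e => (ne_of_lt h) (σ.injective e)
    constructor
    · rintro (⟨h1, h2⟩ | ⟨h1, h2⟩)
      · simp only [act] at h2
        split_ifs at h2 with hlt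
        · exact Or.inl ⟨hlt, h2⟩
        · exact Or.inr ⟨lt_of_le_of_ne (not_lt.mp hlt) hne.symm, by simpa using h2⟩
      · exact absurd h1 (asymm h)
    · rintro (⟨h1, h2⟩ | ⟨h1, h2⟩)
      · refine Or.inl ⟨h, ?_⟩
        simp only [act]
        rw [dif_pos h1]; exact h2
      · refine Or.inl ⟨h, ?_⟩
        simp only [act]
        rw [dif_neg (asymm h1)]
        simpa using h2
  · subst h; constructor
    · rintro (⟨h1, _⟩ | ⟨h1, _⟩) <;> exact absurd h1 (lt_irrefl _)
    · rintro (⟨h1, _⟩ | ⟨h1, _⟩) <;> exact absurd h1 (lt_irrefl _)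
  · have hne : σ j ≠ σ i := fun e => (ne_of_lt h) (σ.injective e)
    constructor
    · rintro (⟨h1, h2⟩ | ⟨h1, h2⟩)
      · exact absurd h1 (asymm h)
      · simp only [act] at h2
        split_ifs at h2 with hlt
        · exact Or.inr ⟨hlt, h2⟩
        · exact Or.inl ⟨lt_of_le_of_ne (not_lt.mp hlt) hne.symm, by simpa using h2⟩
    · rintro (⟨h1, h2⟩ | ⟨h1, h2⟩)
      · refine Or.inr ⟨h, ?_⟩
        simp only [act]
        rw [dif_neg (asymm h1)]
        simpa using h2
      · refine Or.inr ⟨h, ?_⟩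
        simp only [act]
        rw [dif_pos h1]; exact h2

lemma act_act {m : ℕ} (σ : Equiv.Perm (Fin m)) (ω : Orient m) :
    act σ⁻¹ (act σ ω) = ω := by
  funext p
  obtain ⟨⟨i, j⟩, hij⟩ := p
  have hne : σ⁻¹ i ≠ σ⁻¹ j := fun e => (ne_of_lt hij) (by simpa using congrArg σ e)
  simp only [act]
  by_cases h : σ⁻¹ i < σ⁻¹ j
  · rw [dif_pos h]
    rw [dif_pos (by simpa using hij)]
    congr 1
    simp
  · rw [dif_neg h]
    have hlt : σ⁻¹ j < σ⁻¹ i := lt_of_le_of_ne (not_lt.mp h) hne.symm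
    rw [dif_neg (by simp; exact le_of_lt hij)]
    rw [Bool.not_not]
    congr 1
    simp

lemma reaches_act {m : ℕ} (σ : Equiv.Perm (Fin m)) (ω : Orient m) (i j : Fin m) :
    reaches (act σ ω) i j ↔ reaches ω (σ i) (σ j) := by
  constructor
  · intro h
    exact Relation.TransGen.lift σ (fun a b hab => (dir_act σ ω a b).mp hab) _ _ h
  · intro h
    have key : ∀ a b, dir ω a b → dir (act σ ω) (σ.symm a) (σ.symm b) := by
      intro a b hab
      rw [dir_act]
      simpa using hab
    have := Relation.TransGen.lift σ.symm key _ _ h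
    simpa [Function.onFun, reaches] using this

open scoped Classical in
noncomputable def cnt (n : ℕ) (E : Orient n → Prop) : ℕ :=
  (Finset.univ.filter E).card

lemma cnt_congr {n : ℕ} {E F : Orient n → Prop} (h : ∀ ω, E ω ↔ F ω) :
    cnt n E = cnt n F := by
  have : E = F := funext fun ω => propext (h ω)
  rw [this]

open scoped Classical in
lemma cnt_comp_act {m : ℕ} (σ : Equiv.Perm (Fin m)) (E : Orient m → Prop) :
    cnt m E = cnt m (fun ω => E (act σ ω)) := by
  unfold cnt
  apply Finset.card_bij' (fun ω _ => act σ⁻¹ ω) (fun ω _ => act σ ω)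
  · intro ω hω
    simp only [Finset.mem_filter, Finset.mem_univ, true_and] at hω ⊢
    have : act σ (act σ⁻¹ ω) = ω := by
      have := act_act σ⁻¹ ω
      simpa using this
    rw [this]; exact hω
  · intro ω hω
    simp only [Finset.mem_filter, Finset.mem_univ, true_and] at hω ⊢
    exact hω
  · intro ω _
    have := act_act σ⁻¹ ω
    simpa using this
  · intro ω _
    exact act_act σ ω

lemma exists_perm {m : ℕ} (A B : Finset (Fin m)) (hcard : A.card = B.card)
    (t u : Fin m) (ht : t ∉ A) (hu : u ∉ B) :
    ∃ σ : Equiv.Perm (Fin m), A.image σ = B ∧ σ t = u := by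
  classical
  have e : {x // x ∈ A} ≃ {x // x ∈ B} := Finset.equivOfCardEq hcard
  set σ₁ := e.extendSubtype with hσ₁
  have h₁ : ∀ a ∈ A, σ₁ a ∈ B := fun a ha => e.extendSubtype_mem a ha
  have h₂ : σ₁ t ∉ B := e.extendSubtype_not_mem t ht
  refine ⟨(Equiv.swap (σ₁ t) u) * σ₁, ?_, ?_⟩
  · apply Finset.eq_of_subset_of_card_le
    · intro b hb
      simp only [Finset.mem_image] at hb
      obtain ⟨a, ha, rfl⟩ := hb
      have hmem := h₁ a ha
      simp only [Equiv.Perm.mul_apply]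
      rw [Equiv.swap_apply_of_ne_of_ne (fun h => h₂ (by rwa [h] at hmem)) (fun h => hu (by rwa [h] at hmem))]
      exact hmem
    · rw [Finset.card_image_of_injective _ (Equiv.injective _)]
      omega
  · simp [Equiv.swap_apply_left]

/-- the count of "no vertex of A reaches t" depends only on the cardinality of A. -/
lemma cnt_noreach_eq {m : ℕ} (A B : Finset (Fin m)) (hcard : A.card = B.card)
    (t u : Fin m) (ht : t ∉ A) (hu : u ∉ B) :
    cnt m (fun ω => ∀ a ∈ A, ¬ reaches ω a t) = cnt m (fun ω => ∀ b ∈ B, ¬ reaches ω b u) := by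
  obtain ⟨σ, hAB, htu⟩ := exists_perm A B hcard t u ht hu
  rw [cnt_comp_act σ (fun ω => ∀ a ∈ A, ¬ reaches ω a t)]
  apply cnt_congr
  intro ω
  constructor
  · intro h b hb
    rw [← hAB] at hb
    simp only [Finset.mem_image] at hb
    obtain ⟨a, ha, rfl⟩ := hb
    have := h a ha
    rw [reaches_act, htu] at this
    exact this
  · intro h a ha
    rw [reaches_act, htu]
    exact h (σ a) (by rw [← hAB]; exact Finset.mem_image_of_mem _ ha)

/-! ### Decomposition of a tournament on `Fin (k+m)` -/

def kmap {k : ℕ} (m : ℕ) (a : Fin k) : Fin (k + m) :=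
  ⟨a.val, Nat.lt_of_lt_of_le a.isLt (Nat.le_add_right k m)⟩

def rmap (k : ℕ) {m : ℕ} (v : Fin m) : Fin (k + m) :=
  ⟨k + v.val, Nat.add_lt_add_left v.isLt k⟩

lemma rmap_lt_rmap {k m : ℕ} {u v : Fin m} : rmap k u < rmap k v ↔ u < v := by
  simp only [rmap, Fin.mk_lt_mk, Fin.lt_def]
  omega

lemma edge_ext {n : ℕ} {p q : {p : Fin n × Fin n // p.1 < p.2}}
    (h1 : p.1.1.val = q.1.1.val) (h2 : p.1.2.val = q.1.2.val) : p = q :=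
  Subtype.ext (Prod.ext (Fin.ext h1) (Fin.ext h2))

lemma kmap_lt_rmap {k m : ℕ} (a : Fin k) (v : Fin m) : kmap m a < rmap k v := by
  simp only [kmap, rmap, Fin.lt_def]
  exact Nat.lt_of_lt_of_le a.isLt (Nat.le_add_right k v.val)

def crossOf (k m : ℕ) (ω : Orient (k + m)) : Fin m → Fin k → Bool :=
  fun v a => ω ⟨(kmap m a, rmap k v), kmap_lt_rmap a v⟩

def innerOf (k m : ℕ) (ω : Orient (k + m)) : Orient m :=
  fun p => ω ⟨(rmap k p.1.1, rmap k p.1.2), rmap_lt_rmap.mpr p.2⟩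

def okOf (k m : ℕ) (ω : Orient (k + m)) : Orient k :=
  fun p => ω ⟨(kmap m p.1.1, kmap m p.1.2), p.2⟩

def glue (k m : ℕ) (x : Orient k) (c : Fin m → Fin k → Bool) (r : Orient m) :
    Orient (k + m) := fun p =>
  if hj : p.1.2.val < k then
    x ⟨(⟨p.1.1.val, lt_trans p.2 hj⟩, ⟨p.1.2.val, hj⟩), p.2⟩
  else if hi : p.1.1.val < k then
    c ⟨p.1.2.val - k, by have := p.1.2.isLt; omega⟩ ⟨p.1.1.val, hi⟩
  else
    r ⟨(⟨p.1.1.val - k, by have := p.1.1.isLt; have h2 := p.2; omega⟩,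
        ⟨p.1.2.val - k, by have := p.1.2.isLt; omega⟩), by
      have h2 : p.1.1.val < p.1.2.val := p.2
      simp only [Fin.mk_lt_mk]
      omega⟩

lemma glue_ok (k m : ℕ) (x : Orient k) (c : Fin m → Fin k → Bool) (r : Orient m) :
    okOf k m (glue k m x c r) = x := by
  funext p
  obtain ⟨⟨i, j⟩, hij⟩ := p
  simp only [okOf, glue, kmap]
  exact dif_pos j.isLt

lemma glue_cross (k m : ℕ) (x : Orient k) (c : Fin m → Fin k → Bool) (r : Orient m) :
    crossOf k m (glue k m x c r) = c := by
  funext v a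
  simp only [crossOf, glue, kmap, rmap]
  refine (dif_neg (by omega)).trans ((dif_pos a.isLt).trans ?_)
  congr 1 <;> apply Fin.ext <;> simp

lemma glue_inner (k m : ℕ) (x : Orient k) (c : Fin m → Fin k → Bool) (r : Orient m) :
    innerOf k m (glue k m x c r) = r := by
  funext p
  obtain ⟨⟨u, v⟩, huv⟩ := p
  simp only [innerOf, glue, rmap]
  refine (dif_neg (by omega)).trans ((dif_neg (by omega)).trans ?_)
  exact congrArg r (edge_ext (by simp) (by simp))

lemma glue_recon (k m : ℕ) (ω : Orient (k + m)) :
    glue k m (okOf k m ω) (crossOf k m ω) (innerOf k m ω) = ω := by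
  funext p
  obtain ⟨⟨i, j⟩, hij⟩ := p
  have hij' : i.val < j.val := hij
  simp only [glue]
  by_cases hj : j.val < k
  · rw [dif_pos hj]
    simp only [okOf, kmap]
  · rw [dif_neg hj]
    by_cases hi : i.val < k
    · rw [dif_pos hi]
      simp only [crossOf, kmap, rmap]
      exact congrArg ω (edge_ext rfl (by simp; omega))
    · rw [dif_neg hi]
      simp only [innerOf, rmap]
      exact congrArg ω (edge_ext (by simp; omega) (by simp; omega))

/-- the decomposition equivalence -/
def decompose (k m : ℕ) : Orient (k + m) ≃ Orient k × (Fin m → Fin k → Bool) × Orient m where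
  toFun ω := (okOf k m ω, crossOf k m ω, innerOf k m ω)
  invFun y := glue k m y.1 y.2.1 y.2.2
  left_inv ω := glue_recon k m ω
  right_inv y := by
    obtain ⟨x, c, r⟩ := y
    simp [glue_ok, glue_cross, glue_inner]

/-! ### Graph lemmas -/

lemma dir_inner {k m : ℕ} (ω : Orient (k + m)) (u v : Fin m) :
    dir (innerOf k m ω) u v ↔ dir ω (rmap k u) (rmap k v) := by
  unfold dir innerOf
  constructor
  · rintro (⟨h1, h2⟩ | ⟨h1, h2⟩)
    · exact Or.inl ⟨rmap_lt_rmap.mpr h1, h2⟩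
    · exact Or.inr ⟨rmap_lt_rmap.mpr h1, h2⟩
  · rintro (⟨h1, h2⟩ | ⟨h1, h2⟩)
    · exact Or.inl ⟨rmap_lt_rmap.mp h1, h2⟩
    · exact Or.inr ⟨rmap_lt_rmap.mp h1, h2⟩

lemma cross_dir {k m : ℕ} (ω : Orient (k + m)) (v : Fin m) (a : Fin k) :
    crossOf k m ω v a = true ↔ dir ω (kmap m a) (rmap k v) := by
  unfold dir crossOf
  constructor
  · intro h
    exact Or.inl ⟨kmap_lt_rmap a v, h⟩
  · rintro (⟨h1, h2⟩ | ⟨h1, h2⟩)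
    · exact h2
    · exact absurd h1 (asymm (kmap_lt_rmap a v))

/-- edges within the "rest" part -/
def RR {n : ℕ} (k : ℕ) (ω : Orient n) (x y : Fin n) : Prop :=
  dir ω x y ∧ k ≤ x.val ∧ k ≤ y.val

lemma reaches_inner {k m : ℕ} (hm : 0 < m) (ω : Orient (k + m)) (u v : Fin m) :
    reaches (innerOf k m ω) u v ↔ Relation.TransGen (RR k ω) (rmap k u) (rmap k v) := by
  constructor
  · intro h
    refine Relation.TransGen.lift (rmap k) ?_ _ _ h
    intro a b hab
    exact ⟨(dir_inner ω a b).mp hab, Nat.le_add_right k a.val, Nat.le_add_right k b.val⟩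
  · intro h
    have rinv : Fin (k + m) → Fin m := fun x => ⟨x.val - k, by have := x.isLt; omega⟩
    have key : ∀ x y : Fin (k + m), RR k ω x y →
        dir (innerOf k m ω) ⟨x.val - k, by have := x.isLt; omega⟩ ⟨y.val - k, by have := y.isLt; omega⟩ := by
      intro x y ⟨hd, hx, hy⟩
      rw [dir_inner]
      have ex : rmap k (⟨x.val - k, by have := x.isLt; omega⟩ : Fin m) = x := Fin.ext (by simp [rmap]; omega)
      have ey : rmap k (⟨y.val - k, by have := y.isLt; omega⟩ : Fin m) = y := Fin.ext (by simp [rmap]; omega)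
      rw [ex, ey]
      exact hd
    have := Relation.TransGen.lift (fun x : Fin (k + m) => (⟨x.val - k, by have := x.isLt; omega⟩ : Fin m))
      key _ _ h
    have eu : (⟨(rmap k u).val - k, by have := (rmap k u).isLt; omega⟩ : Fin m) = u := Fin.ext (by simp [rmap])
    have ev : (⟨(rmap k v).val - k, by have := (rmap k v).isLt; omega⟩ : Fin m) = v := Fin.ext (by simp [rmap])
    simpa only [Function.onFun, reaches, eu, ev] using this

/-- the key structural fact: every vertex that reaches `t` (where `k ≤ t.val`) either is `t`,
or reaches `t` within the rest, or else some out-neighbor `v` of `K` satisfies the latter. -/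
lemma reach_struct {n k : ℕ} (ω : Orient n) (t : Fin n) (htk : k ≤ t.val)
    (x : Fin n) (h : Relation.TransGen (dir ω) x t) :
    x = t ∨ Relation.TransGen (RR k ω) x t ∨
      ∃ v : Fin n, k ≤ v.val ∧ (∃ a : Fin n, a.val < k ∧ dir ω a v) ∧
        (v = t ∨ Relation.TransGen (RR k ω) v t) := by
  induction h using Relation.TransGen.head_induction_on with
  | single hxt =>
    rename_i x'
    by_cases hx : k ≤ x'.val
    · exact Or.inr (Or.inl (Relation.TransGen.single ⟨hxt, hx, htk⟩))
    · exact Or.inr (Or.inr ⟨t, htk, ⟨x', by omega, hxt⟩, Or.inl rfl⟩)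
  | head hxb hbt IH =>
    rename_i x' b
    by_cases hb : k ≤ b.val
    · rcases IH with rfl | hTG | hthird
      · by_cases hx : k ≤ x'.val
        · exact Or.inr (Or.inl (Relation.TransGen.single ⟨hxb, hx, htk⟩))
        · exact Or.inr (Or.inr ⟨b, htk, ⟨x', by omega, hxb⟩, Or.inl rfl⟩)
      · by_cases hx : k ≤ x'.val
        · exact Or.inr (Or.inl (Relation.TransGen.head ⟨hxb, hx, hb⟩ hTG))
        · exact Or.inr (Or.inr ⟨b, hb, ⟨x', by omega, hxb⟩, Or.inr hTG⟩)
      · exact Or.inr (Or.inr hthird)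
    · rcases IH with rfl | hTG | hthird
      · omega
      · obtain ⟨c, h1, -⟩ := Relation.TransGen.head'_iff.mp hTG
        exact absurd h1.2.1 (by omega)
      · exact Or.inr (Or.inr hthird)

lemma reach_char {k m : ℕ} (hm : 0 < m) (ω : Orient (k + m)) :
    (∃ a : Fin (k + m), a.val < k ∧ reaches ω a (rmap k ⟨0, hm⟩)) ↔
      ((∃ a : Fin k, crossOf k m ω ⟨0, hm⟩ a = true) ∨
        ∃ v : Fin m, (∃ a : Fin k, crossOf k m ω v a = true) ∧
          reaches (innerOf k m ω) v ⟨0, hm⟩) := by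
  set t := rmap k (⟨0, hm⟩ : Fin m) with ht
  have htval : t.val = k := by simp [ht, rmap]
  constructor
  · rintro ⟨a, ha, hr⟩
    rcases reach_struct ω t (le_of_eq htval.symm) a hr with rfl | hTG | ⟨v, hkv, ⟨a', ha', hd⟩, hvt⟩
    · omega
    · obtain ⟨c, h1, -⟩ := Relation.TransGen.head'_iff.mp hTG
      exact absurd h1.2.1 (by omega)
    · have hka : kmap m (⟨a'.val, ha'⟩ : Fin k) = a' := Fin.ext rfl
      rcases hvt with rfl | hTG
      · left
        refine ⟨⟨a'.val, ha'⟩, ?_⟩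
        rw [cross_dir, hka, ← ht]
        exact hd
      · right
        have hv' : rmap k (⟨v.val - k, by have := v.isLt; omega⟩ : Fin m) = v :=
          Fin.ext (by simp [rmap]; omega)
        refine ⟨⟨v.val - k, by have := v.isLt; omega⟩, ⟨⟨a'.val, ha'⟩, ?_⟩, ?_⟩
        · rw [cross_dir, hka, hv']
          exact hd
        · rw [reaches_inner hm, hv', ← ht]
          exact hTG
  · rintro (⟨a, hc⟩ | ⟨v, ⟨a, hc⟩, hri⟩)
    · refine ⟨kmap m a, a.isLt, Relation.TransGen.single ?_⟩
      exact (cross_dir ω _ a).mp hc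
    · refine ⟨kmap m a, a.isLt, ?_⟩
      have h1 : dir ω (kmap m a) (rmap k v) := (cross_dir ω v a).mp hc
      have h2 : Relation.TransGen (RR k ω) (rmap k v) t := (reaches_inner hm ω v _).mp hri
      have h3 : Relation.TransGen (dir ω) (rmap k v) t :=
        Relation.TransGen.mono (fun x y h => h.1) _ _ h2
      exact Relation.TransGen.head h1 h3

/-! ### Counting -/

open scoped Classical in
lemma cnt_decompose {k m : ℕ} (P : Orient (k + m) → Prop)
    (Q : (Fin m → Fin k → Bool) → Orient m → Prop)
    (hPQ : ∀ ω, P ω ↔ Q (crossOf k m ω) (innerOf k m ω)) :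
    cnt (k + m) P = Fintype.card (Orient k) * ∑ c : Fin m → Fin k → Bool, cnt m (Q c) := by
  unfold cnt
  rw [Finset.card_filter]
  have step1 : ∑ ω : Orient (k + m), (if P ω then 1 else 0) =
      ∑ y : Orient k × ((Fin m → Fin k → Bool) × Orient m),
        (if Q y.2.1 y.2.2 then 1 else 0) := by
    apply Fintype.sum_equiv (decompose k m)
    intro ω
    simp only [decompose, Equiv.coe_fn_mk]
    exact if_congr (hPQ ω) rfl rfl
  rw [step1]
  rw [Fintype.sum_prod_type]
  have step2 : ∀ x : Orient k,
      (∑ y : (Fin m → Fin k → Bool) × Orient m, (if Q y.1 y.2 then 1 else 0)) =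
      ∑ c : Fin m → Fin k → Bool, cnt m (Q c) := by
    intro x
    rw [Fintype.sum_prod_type]
    apply Finset.sum_congr rfl
    intro c _
    rw [cnt, Finset.card_filter]
  calc ∑ x : Orient k, ∑ y : (Fin m → Fin k → Bool) × Orient m, (if Q y.1 y.2 then 1 else 0)
      = ∑ _x : Orient k, ∑ c : Fin m → Fin k → Bool, cnt m (Q c) :=
        Finset.sum_congr rfl (fun x _ => step2 x)
    _ = Fintype.card (Orient k) * ∑ c : Fin m → Fin k → Bool, cnt m (Q c) := by
        rw [Finset.sum_const, Finset.card_univ, smul_eq_mul]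

lemma card_filter_val_lt {m i : ℕ} (hi : i ≤ m) :
    (Finset.univ.filter (fun a : Fin m => a.val < i)).card = i := by
  classical
  apply Finset.card_eq_of_bijective (fun j hj => ⟨j, lt_of_lt_of_le hj hi⟩)
  · intro a ha
    simp only [Finset.mem_filter, Finset.mem_univ, true_and] at ha
    exact ⟨a.val, ha, rfl⟩
  · intro j hj
    simp only [Finset.mem_filter, Finset.mem_univ, true_and]
    exact hj
  · intro j₁ h₁ j₂ h₂ h
    simpa [Fin.ext_iff] using h

/-- the count of the `f`-event equals the count of "no vertex of A reaches t". -/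
lemma cnt_fEvent_eq {m i : ℕ} (hi : i < m) (A : Finset (Fin m)) (t : Fin m)
    (hA : A.card = i) (ht : t ∉ A) :
    cnt m (fun ω => ∀ a t' : Fin m, a.val < i → t'.val = i → ¬ reaches ω a t') =
      cnt m (fun ω => ∀ a ∈ A, ¬ reaches ω a t) := by
  classical
  set A₀ : Finset (Fin m) := Finset.univ.filter (fun a : Fin m => a.val < i) with hA₀
  have h1 : cnt m (fun ω => ∀ a t' : Fin m, a.val < i → t'.val = i → ¬ reaches ω a t') =
      cnt m (fun ω => ∀ a ∈ A₀, ¬ reaches ω a (⟨i, hi⟩ : Fin m)) := by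
    apply cnt_congr
    intro ω
    constructor
    · intro h a ha
      rw [hA₀, Finset.mem_filter] at ha
      exact h a _ ha.2 rfl
    · intro h a t' ha ht'
      have : t' = ⟨i, hi⟩ := Fin.ext ht'
      subst this
      exact h a (by rw [hA₀, Finset.mem_filter]; exact ⟨Finset.mem_univ a, ha⟩)
  rw [h1]
  apply cnt_noreach_eq
  · rw [hA₀, card_filter_val_lt (le_of_lt hi), hA]
  · rw [hA₀, Finset.mem_filter]
    simp
  · exact ht

lemma cnt_false {m : ℕ} (P : Orient m → Prop) (h : ∀ ω, ¬ P ω) : cnt m P = 0 := by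
  classical
  unfold cnt
  rw [Finset.card_eq_zero]
  apply Finset.filter_eq_empty_iff.mpr
  intro ω _
  exact h ω


open scoped Classical in
lemma card_fiber {k m : ℕ} (A : Finset (Fin m)) :
    (Finset.univ.filter (fun c : Fin m → Fin k → Bool =>
      Finset.univ.filter (fun v => ∃ a, c v a = true) = A)).card = (2 ^ k - 1) ^ A.card := by
  have hnotex : ∀ w : Fin k → Bool, (¬ ∃ a, w a = true) ↔ w = (fun _ => false) := by
    intro w
    constructor
    · intro h
      funext a
      by_contra hne
      exact h ⟨a, by revert hne; cases w a <;> simp⟩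
    · rintro rfl
      simp
  have hset : (Finset.univ.filter (fun c : Fin m → Fin k → Bool =>
      Finset.univ.filter (fun v => ∃ a, c v a = true) = A)) =
      Fintype.piFinset (fun v : Fin m => if v ∈ A
        then Finset.univ.filter (fun w : Fin k → Bool => ∃ a, w a = true)
        else ({fun _ => false} : Finset (Fin k → Bool))) := by
    ext c
    simp only [Finset.mem_filter, Finset.mem_univ, true_and, Fintype.mem_piFinset]
    rw [Finset.ext_iff]
    constructor
    · intro h v
      have hv2 := h v
      simp only [Finset.mem_filter, Finset.mem_univ, true_and] at hv2
      by_cases hv : v ∈ A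
      · rw [if_pos hv]
        simp only [Finset.mem_filter, Finset.mem_univ, true_and]
        exact hv2.mpr hv
      · rw [if_neg hv]
        simp only [Finset.mem_singleton]
        exact (hnotex (c v)).mp (fun he => hv (hv2.mp he))
    · intro h v
      have hv2 := h v
      simp only [Finset.mem_filter, Finset.mem_univ, true_and]
      by_cases hv : v ∈ A
      · rw [if_pos hv] at hv2
        simp only [Finset.mem_filter, Finset.mem_univ, true_and] at hv2
        exact ⟨fun _ => hv, fun _ => hv2⟩
      · rw [if_neg hv] at hv2
        simp only [Finset.mem_singleton] at hv2
        exact ⟨fun he => absurd he ((hnotex (c v)).mpr hv2), fun hin => absurd hin hv⟩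
  rw [hset, Fintype.card_piFinset]
  have hgood : (Finset.univ.filter (fun w : Fin k → Bool => ∃ a, w a = true)).card = 2 ^ k - 1 := by
    have hgset : (Finset.univ.filter (fun w : Fin k → Bool => ∃ a, w a = true)) =
        Finset.univ \ ({fun _ => false} : Finset (Fin k → Bool)) := by
      ext w
      simp only [Finset.mem_filter, Finset.mem_univ, true_and, Finset.mem_sdiff,
        Finset.mem_singleton]
      constructor
      · intro h he
        exact ((hnotex w).mpr he) h
      · intro h
        by_contra hc
        exact h ((hnotex w).mp hc)
    rw [hgset, Finset.card_sdiff_of_subset (Finset.subset_univ _), Finset.card_univ,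
      Fintype.card_fun, Finset.card_singleton]
    simp
  calc ∏ v : Fin m, (if v ∈ A
        then Finset.univ.filter (fun w : Fin k → Bool => ∃ a, w a = true)
        else ({fun _ => false} : Finset (Fin k → Bool))).card
      = ∏ v : Fin m, (if v ∈ A then 2 ^ k - 1 else 1) := by
        apply Finset.prod_congr rfl
        intro v _
        by_cases hv : v ∈ A
        · rw [if_pos hv, if_pos hv, hgood]
        · rw [if_neg hv, if_neg hv, Finset.card_singleton]
    _ = (2 ^ k - 1) ^ A.card := by
        rw [Finset.prod_ite_mem Finset.univ A (fun _ => 2 ^ k - 1)]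
        rw [Finset.univ_inter, Finset.prod_const]

open scoped Classical in
lemma sum_c {k m : ℕ} (hm : 0 < m) :
    (∑ c : Fin m → Fin k → Bool, cnt m (fun r =>
      ¬((∃ a, c ⟨0, hm⟩ a = true) ∨
        ∃ v, (∃ a, c v a = true) ∧ reaches r v ⟨0, hm⟩))) =
    ∑ i ∈ Finset.range m, (m - 1).choose i * ((2 ^ k - 1) ^ i *
      cnt m (fun ω => ∀ a t' : Fin m, a.val < i → t'.val = i → ¬ reaches ω a t')) := by
  set z0 : Fin m := ⟨0, hm⟩ with hz0
  set Nf : ℕ → ℕ := fun i =>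
    cnt m (fun ω => ∀ a t' : Fin m, a.val < i → t'.val = i → ¬ reaches ω a t') with hNf
  set F : Finset (Fin m) → ℕ := fun A => if z0 ∈ A then 0 else Nf A.card with hF
  have step1 : ∀ c : Fin m → Fin k → Bool,
      cnt m (fun r => ¬((∃ a, c z0 a = true) ∨
        ∃ v, (∃ a, c v a = true) ∧ reaches r v z0)) =
      F (Finset.univ.filter (fun v => ∃ a, c v a = true)) := by
    intro c
    set L : Finset (Fin m) := Finset.univ.filter (fun v => ∃ a, c v a = true) with hL
    by_cases h0 : ∃ a, c z0 a = true
    · rw [cnt_false _ (fun r hr => hr (Or.inl h0))]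
      rw [hF]
      simp only []
      rw [if_pos (by rw [hL, Finset.mem_filter]; exact ⟨Finset.mem_univ _, h0⟩)]
    · have hz0L : z0 ∉ L := by
        rw [hL, Finset.mem_filter]
        intro hmem
        exact h0 hmem.2
      have hcardlt : L.card < m := by
        have hsub : L ⊆ Finset.univ.erase z0 := by
          intro v hv
          rw [Finset.mem_erase]
          exact ⟨fun he => hz0L (he ▸ hv), Finset.mem_univ _⟩
        have := Finset.card_le_card hsub
        rw [Finset.card_erase_of_mem (Finset.mem_univ _), Finset.card_univ,
          Fintype.card_fin] at this
        omega
      have e1 : cnt m (fun r => ¬((∃ a, c z0 a = true) ∨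
          ∃ v, (∃ a, c v a = true) ∧ reaches r v z0)) =
          cnt m (fun r => ∀ v ∈ L, ¬ reaches r v z0) := by
        apply cnt_congr
        intro r
        constructor
        · intro hQ v hv hre
          exact hQ (Or.inr ⟨v, (Finset.mem_filter.mp hv).2, hre⟩)
        · rintro hall (h | ⟨v, hv, hre⟩)
          · exact h0 h
          · exact hall v (Finset.mem_filter.mpr ⟨Finset.mem_univ _, hv⟩) hre
      rw [e1, ← cnt_fEvent_eq hcardlt L z0 rfl hz0L]
      rw [hF]
      simp only []
      rw [if_neg hz0L]
  calc (∑ c : Fin m → Fin k → Bool, cnt m (fun r =>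
      ¬((∃ a, c z0 a = true) ∨ ∃ v, (∃ a, c v a = true) ∧ reaches r v z0)))
      = ∑ c : Fin m → Fin k → Bool,
          F (Finset.univ.filter (fun v => ∃ a, c v a = true)) :=
        Finset.sum_congr rfl (fun c _ => step1 c)
    _ = ∑ A ∈ (Finset.univ : Finset (Fin m)).powerset,
          (2 ^ k - 1) ^ A.card * F A := by
        rw [← Finset.sum_fiberwise_of_maps_to
          (g := fun c : Fin m → Fin k → Bool =>
            Finset.univ.filter (fun v => ∃ a, c v a = true))
          (t := (Finset.univ : Finset (Fin m)).powerset)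
          (fun c _ => Finset.mem_powerset.mpr (Finset.filter_subset _ _))
          (fun c => F (Finset.univ.filter (fun v => ∃ a, c v a = true)))]
        apply Finset.sum_congr rfl
        intro A _
        calc (∑ c ∈ Finset.univ.filter (fun c : Fin m → Fin k → Bool =>
              Finset.univ.filter (fun v => ∃ a, c v a = true) = A),
              F (Finset.univ.filter (fun v => ∃ a, c v a = true)))
            = ∑ c ∈ Finset.univ.filter (fun c : Fin m → Fin k → Bool =>
              Finset.univ.filter (fun v => ∃ a, c v a = true) = A), F A := by
              apply Finset.sum_congr rfl
              intro c hc
              rw [(Finset.mem_filter.mp hc).2]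
          _ = (2 ^ k - 1) ^ A.card * F A := by
              rw [Finset.sum_const, card_fiber A, smul_eq_mul]
    _ = ∑ A ∈ ((Finset.univ : Finset (Fin m)).erase z0).powerset,
          (2 ^ k - 1) ^ A.card * F A := by
        symm
        apply Finset.sum_subset (Finset.powerset_mono.mpr (Finset.erase_subset _ _))
        intro A hA hnA
        obtain ⟨x, hxA, hxe⟩ := Finset.not_subset.mp (fun hs => hnA (Finset.mem_powerset.mpr hs))
        have hx : x = z0 := by
          by_contra hne
          exact hxe (Finset.mem_erase.mpr ⟨hne, Finset.mem_univ _⟩)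
        have : z0 ∈ A := hx ▸ hxA
        rw [hF]
        simp only []
        rw [if_pos this, mul_zero]
    _ = ∑ A ∈ ((Finset.univ : Finset (Fin m)).erase z0).powerset,
          (2 ^ k - 1) ^ A.card * Nf A.card := by
        apply Finset.sum_congr rfl
        intro A hA
        have hz0A : z0 ∉ A := fun hin =>
          (Finset.mem_erase.mp (Finset.mem_powerset.mp hA hin)).1 rfl
        rw [hF]
        simp only []
        rw [if_neg hz0A]
    _ = ∑ i ∈ Finset.range m, (m - 1).choose i * ((2 ^ k - 1) ^ i * Nf i) := by
        rw [Finset.sum_powerset]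
        have hec : ((Finset.univ : Finset (Fin m)).erase z0).card = m - 1 := by
          rw [Finset.card_erase_of_mem (Finset.mem_univ _), Finset.card_univ, Fintype.card_fin]
        rw [hec, show m - 1 + 1 = m by omega]
        apply Finset.sum_congr rfl
        intro j hj
        calc (∑ A ∈ Finset.powersetCard j ((Finset.univ : Finset (Fin m)).erase z0),
              (2 ^ k - 1) ^ A.card * Nf A.card)
            = ∑ A ∈ Finset.powersetCard j ((Finset.univ : Finset (Fin m)).erase z0),
              (2 ^ k - 1) ^ j * Nf j := by
              apply Finset.sum_congr rfl
              intro A hA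
              rw [(Finset.mem_powersetCard.mp hA).2]
          _ = (m - 1).choose j * ((2 ^ k - 1) ^ j * Nf j) := by
              rw [Finset.sum_const, Finset.card_powersetCard, hec, smul_eq_mul]

lemma card_orient_decompose (k m : ℕ) :
    Fintype.card (Orient (k + m)) =
      Fintype.card (Orient k) * (2 ^ (k * m) * Fintype.card (Orient m)) := by
  rw [Fintype.card_congr (decompose k m), Fintype.card_prod, Fintype.card_prod]
  congr 2
  rw [Fintype.card_fun, Fintype.card_fun]
  simp [← pow_mul, mul_comm]

lemma Pr_eq (n : ℕ) (E : Orient n → Prop) :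
    Pr n E = (cnt n E : ℝ) / (Fintype.card (Orient n) : ℝ) := rfl


theorem f_recursion (n k : ℕ) (hk : 1 ≤ k) (hn : k + 1 ≤ n) :
    f n k = ∑ i ∈ Finset.range (n - k),
      ((n - k - 1).choose i : ℝ) * ((2 : ℝ) ^ k - 1) ^ i / 2 ^ (k * (n - k)) * f (n - k) i := by
  obtain ⟨m, rfl⟩ : ∃ m, n = k + m := ⟨n - k, by omega⟩
  have hm : 0 < m := by omega
  rw [show k + m - k = m from by omega]
  classical
  set ev : Orient (k + m) → Prop :=
    fun ω => ∀ a s : Fin (k + m), a.val < k → s.val = k → ¬ reaches ω a s with hev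
  have hPQ : ∀ ω : Orient (k + m), ev ω ↔
      (fun (c : Fin m → Fin k → Bool) (r : Orient m) =>
        ¬((∃ a, c (⟨0, hm⟩ : Fin m) a = true) ∨
          ∃ v, (∃ a, c v a = true) ∧ reaches r v ⟨0, hm⟩))
        (crossOf k m ω) (innerOf k m ω) := by
    intro ω
    simp only [hev]
    rw [← reach_char hm ω]
    constructor
    · rintro h ⟨a, ha, hr⟩
      exact h a (rmap k ⟨0, hm⟩) ha (by simp [rmap]) hr
    · intro h a s ha hs hr
      have hsr : s = rmap k (⟨0, hm⟩ : Fin m) := Fin.ext (by simp [rmap, hs])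
      exact h ⟨a, ha, hsr ▸ hr⟩
  have hcnt := cnt_decompose ev
    (fun (c : Fin m → Fin k → Bool) (r : Orient m) =>
      ¬((∃ a, c (⟨0, hm⟩ : Fin m) a = true) ∨
        ∃ v, (∃ a, c v a = true) ∧ reaches r v ⟨0, hm⟩)) hPQ
  rw [sum_c hm] at hcnt
  have hfek : f (k + m) k = (cnt (k + m) ev : ℝ) / (Fintype.card (Orient (k + m)) : ℝ) := rfl
  rw [hfek, hcnt, card_orient_decompose k m]
  have hOk : ((Fintype.card (Orient k) : ℝ)) ≠ 0 := Nat.cast_ne_zero.mpr Fintype.card_ne_zero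
  have hOm : ((Fintype.card (Orient m) : ℝ)) ≠ 0 := Nat.cast_ne_zero.mpr Fintype.card_ne_zero
  push_cast
  rw [mul_div_mul_left _ _ hOk]
  rw [Finset.sum_div]
  apply Finset.sum_congr rfl
  intro i hi
  have hfmi : f m i = (cnt m (fun ω => ∀ a t' : Fin m,
      a.val < i → t'.val = i → ¬ reaches ω a t') : ℝ) / (Fintype.card (Orient m) : ℝ) := rfl
  rw [hfmi]
  have h2k : ((2 ^ k - 1 : ℕ) : ℝ) = (2 : ℝ) ^ k - 1 := by
    have h1 : 1 ≤ 2 ^ k := Nat.one_le_two_pow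
    push_cast [Nat.cast_sub h1]
    ring
  rw [h2k]
  have h2km : ((2 : ℝ) ^ (k * m)) ≠ 0 := by positivity
  field_simp
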